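/- Fix t in (0,1). For each (t,μ) with (1-μ)·R'(t)+(1-F(t))·μ ≥ 0, let p1(t,μ) denote the unique first-round price in the sophisticated-focused implementation of t at sophistication μ. Then, for fixed t, the map μ ↦ p1(t,μ) is differentiable and strictly increasing on the set {μ in [0,1) : (1-μ)R'(t)+(1-F(t))μ ≥ 0}. -/

import Mathlib

open MeasureTheory Set Filter

noncomputable section

namespace RepeatedSales

/-- `F` is the CDF of an atomless distribution fully supported on `[0,1]`:
continuous, strictly increasing on `[0,1]`, with `F 0 = 0` and `F 1 = 1`. -/
structure NiceCDF (F : ℝ → ℝ) : Prop where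
  cont : Continuous F
  mono : StrictMonoOn F (Icc (0:ℝ) 1)
  zero : F 0 = 0
  one : F 1 = 1

/-- The (price-posting) revenue curve `R(p) = p (1 - F p)`. -/
def Rcurve (F : ℝ → ℝ) (p : ℝ) : ℝ := p * (1 - F p)

/-- The CDF truncated at `x` from above: `F_{≤x}(v) = min (F v / F x) 1`. -/
def Fle (F : ℝ → ℝ) (x v : ℝ) : ℝ := min (F v / F x) 1

/-- The CDF truncated at `x` from below: `F_{≥x}(v) = max ((F v - F x)/(1 - F x)) 0`. -/
def Fge (F : ℝ → ℝ) (x v : ℝ) : ℝ := max ((F v - F x) / (1 - F x)) 0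

/-- Revenue curve of the truncated distribution `F_{≤x}`. -/
def Rle (F : ℝ → ℝ) (x p : ℝ) : ℝ := p * (1 - Fle F x p)

/-- Revenue curve of the truncated distribution `F_{≥x}`. -/
def Rge (F : ℝ → ℝ) (x p : ℝ) : ℝ := p * (1 - Fge F x p)

/-- Posterior probability of sophistication after a reject. -/
def muR (F : ℝ → ℝ) (μ p1 t : ℝ) : ℝ := μ * F t / (μ * F t + (1 - μ) * F p1)

/-- Posterior probability of sophistication after an accept. -/
def muA (F : ℝ → ℝ) (μ p1 t : ℝ) : ℝ :=
  μ * (1 - F t) / (μ * (1 - F t) + (1 - μ) * (1 - F p1))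

/-- The seller's posterior CDF over values after a first-round reject. -/
def FrejCDF (F : ℝ → ℝ) (μ p1 t v : ℝ) : ℝ :=
  muR F μ p1 t * Fle F t v + (1 - muR F μ p1 t) * Fle F p1 v

/-- The seller's posterior CDF over values after a first-round accept. -/
def FaccCDF (F : ℝ → ℝ) (μ p1 t v : ℝ) : ℝ :=
  muA F μ p1 t * Fge F t v + (1 - muA F μ p1 t) * Fge F p1 v

/-- The second-round revenue curve conditioned on a reject. -/
def Rrej (F : ℝ → ℝ) (μ p1 t p : ℝ) : ℝ := p * (1 - FrejCDF F μ p1 t p)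

/-- The second-round revenue curve conditioned on an accept. -/
def Racc (F : ℝ → ℝ) (μ p1 t p : ℝ) : ℝ := p * (1 - FaccCDF F μ p1 t p)

/-- The (topological) support of a measure on `ℝ`: points all of whose
neighborhoods have positive measure. -/
def msupp (ν : Measure ℝ) : Set ℝ := {x | ∀ U ∈ nhds x, ν U ≠ 0}

/-- A continuation `(p1, p2R, p2A, t)` at sophistication level `μ`:
`p2R`, `p2A` are (random) prices, i.e. probability measures supported in `[0,1]`,
every point of the support of `p2R` (resp. `p2A`) maximizes the reject (resp. accept)
revenue curve over `[0,1]`, and the threshold indifference equation holds.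
The denominators defining the posteriors are assumed positive. -/
structure Continuation (F : ℝ → ℝ) (μ p1 : ℝ) (p2R p2A : Measure ℝ) (t : ℝ) : Prop where
  denR_pos : 0 < μ * F t + (1 - μ) * F p1
  denA_pos : 0 < μ * (1 - F t) + (1 - μ) * (1 - F p1)
  probR : IsProbabilityMeasure p2R
  probA : IsProbabilityMeasure p2A
  suppR01 : msupp p2R ⊆ Icc 0 1
  suppA01 : msupp p2A ⊆ Icc 0 1
  optR : ∀ p ∈ msupp p2R, IsMaxOn (Rrej F μ p1 t) (Icc 0 1) p
  optA : ∀ p ∈ msupp p2A, IsMaxOn (Racc F μ p1 t) (Icc 0 1) p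
  indiff : t - p1 + (∫ x, max (t - x) 0 ∂p2A) = ∫ x, max (t - x) 0 ∂p2R

/-- A continuation with deterministic accept price `p2A ≥ t`. -/
def SophFocused (p2A : Measure ℝ) (t : ℝ) : Prop :=
  ∃ a : ℝ, p2A = Measure.dirac a ∧ t ≤ a

/-- A continuation with deterministic accept price `p2A < t`. -/
def NaiveFocused (p2A : Measure ℝ) (t : ℝ) : Prop :=
  ∃ a : ℝ, p2A = Measure.dirac a ∧ a < t

/-- The seller's expected revenue of a continuation at sophistication `μ`. -/
def sellerRev (F : ℝ → ℝ) (μ p1 t : ℝ) (p2R p2A : Measure ℝ) : ℝ :=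
  μ * (p1 * (1 - F t) + (∫ a, (if a ≤ t then a * (1 - F a) else 0) ∂p2A)
      + ∫ r, r * (F t - F r) ∂p2R)
  + (1 - μ) * (p1 * (1 - F p1) + (∫ a, a * (1 - F a) ∂p2A)
      + ∫ r, (if r ≤ p1 then r * (F p1 - F r) else 0) ∂p2R)


/-! ### Auxiliary measure-support lemmas -/

section MeasAux

open scoped ENNReal Classical

lemma isOpen_compl_msupp (ν : Measure ℝ) : IsOpen (msupp ν)ᶜ := by
  rw [isOpen_iff_mem_nhds]
  intro x hx
  simp only [mem_compl_iff, msupp, mem_setOf_eq, not_forall] at hx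
  obtain ⟨U, hU, hU0⟩ := hx
  push_neg at hU0
  filter_upwards [eventually_mem_nhds_iff.mpr hU] with y hy
  simp only [mem_compl_iff, msupp, mem_setOf_eq, not_forall]
  exact ⟨U, hy, by simpa using hU0⟩

lemma msupp_compl_null (ν : Measure ℝ) : ν (msupp ν)ᶜ = 0 := by
  apply measure_null_of_locally_null
  intro x hx
  simp only [mem_compl_iff, msupp, mem_setOf_eq, not_forall] at hx
  obtain ⟨U, hU, hU0⟩ := hx
  push_neg at hU0
  exact ⟨U, nhdsWithin_le_nhds hU, hU0⟩

lemma msupp_nonempty (ν : Measure ℝ) [IsProbabilityMeasure ν] : (msupp ν).Nonempty := by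
  by_contra h
  rw [not_nonempty_iff_eq_empty] at h
  have := msupp_compl_null ν
  rw [h, compl_empty] at this
  simp [measure_univ] at this

lemma mem_msupp_pos {ν : Measure ℝ} {a b : ℝ} (hsub : msupp ν ⊆ {a, b}) (hab : a ≠ b)
    (ha : a ∈ msupp ν) : ν {a} ≠ 0 := by
  intro h0
  have hU : ({b}ᶜ : Set ℝ) ∈ nhds a := by
    apply IsOpen.mem_nhds (isOpen_compl_singleton)
    simpa using hab
  apply ha ({b}ᶜ) hU
  have hsub2 : ({b}ᶜ : Set ℝ) ⊆ {a} ∪ (msupp ν)ᶜ := by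
    intro y hy
    by_cases hm : y ∈ msupp ν
    · rcases hsub hm with h | h
      · exact Or.inl h
      · exact absurd h hy
    · exact Or.inr hm
  have h1 : ν ({b}ᶜ) ≤ ν {a} + ν (msupp ν)ᶜ :=
    le_trans (measure_mono hsub2) (measure_union_le _ _)
  rw [h0, msupp_compl_null ν, add_zero] at h1
  exact le_antisymm h1 zero_le

lemma measure_apply_of_msupp_pair {ν : Measure ℝ} {a b : ℝ} (hsub : msupp ν ⊆ {a, b})
    (hab : a ≠ b) {s : Set ℝ} (hs : MeasurableSet s) :
    ν s = (if a ∈ s then ν {a} else 0) + (if b ∈ s then ν {b} else 0) := by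
  have h1 : ν s = ν (s ∩ {a, b}) + ν (s \ {a, b}) :=
    (measure_inter_add_diff s (by measurability)).symm
  have h2 : ν (s \ {a, b}) = 0 := by
    refine le_antisymm (le_trans (measure_mono ?_) (msupp_compl_null ν).le) zero_le
    intro y hy
    exact fun hm => hy.2 (hsub hm)
  have h3 : s ∩ ({a, b} : Set ℝ) = (s ∩ {a}) ∪ (s ∩ {b}) := by
    rw [← inter_union_distrib_left]; rfl
  have h4 : ν ((s ∩ {a}) ∪ (s ∩ {b})) = ν (s ∩ {a}) + ν (s ∩ {b}) := by
    apply measure_union _ (hs.inter (measurableSet_singleton b))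
    exact Disjoint.mono inter_subset_right inter_subset_right (by simpa using hab)
  have h5 : ν (s ∩ {a}) = if a ∈ s then ν {a} else 0 := by
    by_cases h : a ∈ s
    · rw [if_pos h, inter_eq_self_of_subset_right (by simpa using h)]
    · rw [if_neg h]
      have he : s ∩ {a} = ∅ := by
        ext y; simp only [mem_inter_iff, mem_singleton_iff, mem_empty_iff_false, iff_false]
        rintro ⟨hy, rfl⟩; exact h hy
      rw [he, measure_empty]
  have h6 : ν (s ∩ {b}) = if b ∈ s then ν {b} else 0 := by
    by_cases h : b ∈ s
    · rw [if_pos h, inter_eq_self_of_subset_right (by simpa using h)]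
    · rw [if_neg h]
      have he : s ∩ {b} = ∅ := by
        ext y; simp only [mem_inter_iff, mem_singleton_iff, mem_empty_iff_false, iff_false]
        rintro ⟨hy, rfl⟩; exact h hy
      rw [he, measure_empty]
  rw [h1, h2, h3, h4, h5, h6, add_zero]

lemma msupp_pair_decomp {ν : Measure ℝ} {a b : ℝ} (hsub : msupp ν ⊆ {a, b}) (hab : a ≠ b) :
    ν = ν {a} • Measure.dirac a + ν {b} • Measure.dirac b := by
  ext s hs
  rw [measure_apply_of_msupp_pair hsub hab hs]
  rw [Measure.add_apply, Measure.smul_apply, Measure.smul_apply,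
    Measure.dirac_apply' a hs, Measure.dirac_apply' b hs]
  congr 1
  · by_cases h : a ∈ s <;> simp [indicator, h]
  · by_cases h : b ∈ s <;> simp [indicator, h]

lemma integrable_dirac_cont {f : ℝ → ℝ} (hf : Continuous f) (a : ℝ) :
    Integrable f (Measure.dirac a) := by
  constructor
  · exact hf.aestronglyMeasurable
  · unfold HasFiniteIntegral
    rw [MeasureTheory.lintegral_dirac]
    exact ENNReal.coe_lt_top

lemma msupp_pair_integral {ν : Measure ℝ} [IsProbabilityMeasure ν] {a b : ℝ}
    (hsub : msupp ν ⊆ {a, b}) (hab : a ≠ b) {f : ℝ → ℝ} (hf : Continuous f) :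
    ∫ x, f x ∂ν = (ν {a}).toReal * f a + (ν {b}).toReal * f b := by
  have key : ∫ x, f x ∂ν = ∫ x, f x ∂(ν {a} • Measure.dirac a + ν {b} • Measure.dirac b) := by
    rw [← msupp_pair_decomp hsub hab]
  rw [key, integral_add_measure ((integrable_dirac_cont hf a).smul_measure (measure_ne_top ν _))
    ((integrable_dirac_cont hf b).smul_measure (measure_ne_top ν _)),
    integral_smul_measure, integral_smul_measure, integral_dirac, integral_dirac]
  simp [smul_eq_mul]

lemma msupp_pair_weights {ν : Measure ℝ} [IsProbabilityMeasure ν] {a b : ℝ}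
    (hsub : msupp ν ⊆ {a, b}) (hab : a ≠ b) :
    (ν {a}).toReal + (ν {b}).toReal = 1 := by
  have h := msupp_pair_integral hsub hab (f := fun _ => (1:ℝ)) continuous_const
  simp only [mul_one] at h
  rw [← h]
  simp

lemma msupp_single_integral {ν : Measure ℝ} [IsProbabilityMeasure ν] {a : ℝ}
    (hsub : msupp ν ⊆ {a}) {f : ℝ → ℝ} (hf : Continuous f) :
    ∫ x, f x ∂ν = f a := by
  have hν : ν = Measure.dirac a := by
    ext s hs
    have h1 : ν s = ν (s ∩ {a}) + ν (s \ {a}) :=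
      (measure_inter_add_diff s (measurableSet_singleton a)).symm
    have h2 : ν (s \ {a}) = 0 := by
      refine le_antisymm (le_trans (measure_mono ?_) (msupp_compl_null ν).le) zero_le
      exact fun y hy hm => hy.2 (hsub hm)
    have h4 : ν {a} = 1 := by
      have h3 : ν univ = ν (univ ∩ {a}) + ν (univ \ {a}) :=
        (measure_inter_add_diff univ (measurableSet_singleton a)).symm
      have h5 : ν (univ \ {a}) = 0 := by
        refine le_antisymm (le_trans (measure_mono ?_) (msupp_compl_null ν).le) zero_le
        exact fun y hy hm => hy.2 (hsub hm)
      rw [measure_univ, h5, add_zero, univ_inter] at h3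
      exact h3.symm
    rw [h1, h2, add_zero, Measure.dirac_apply' a hs]
    by_cases h : a ∈ s
    · rw [inter_eq_self_of_subset_right (by simpa using h), h4]
      simp [indicator, h]
    · have he : s ∩ {a} = ∅ := by
        ext y; simp only [mem_inter_iff, mem_singleton_iff, mem_empty_iff_false, iff_false]
        rintro ⟨hy, rfl⟩; exact h hy
      rw [he, measure_empty]
      simp [indicator, h]
  rw [hν, integral_dirac]

end MeasAux


/-! ### Analysis auxiliaries -/

section AnalysisAux

variable {F : ℝ → ℝ}

open scoped Classical

lemma NiceCDF.Fpos (hF : NiceCDF F) {p : ℝ} (h0 : 0 < p) (h1 : p ≤ 1) : 0 < F p := by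
  have := hF.mono (left_mem_Icc.mpr zero_le_one) ⟨h0.le, h1⟩ h0
  rwa [hF.zero] at this

lemma NiceCDF.Flt1 (hF : NiceCDF F) {p : ℝ} (h0 : 0 ≤ p) (h1 : p < 1) : F p < 1 := by
  have := hF.mono ⟨h0, h1.le⟩ (right_mem_Icc.mpr zero_le_one) h1
  rwa [hF.one] at this

lemma NiceCDF.FmonoOn (hF : NiceCDF F) : MonotoneOn F (Icc 0 1) := hF.mono.monotoneOn

lemma Rcurve_cont (hF : NiceCDF F) : Continuous (Rcurve F) :=
  continuous_id.mul (continuous_const.sub hF.cont)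

lemma Rcurve_zero : Rcurve F 0 = 0 := by simp [Rcurve]

lemma Rcurve_one (hF : NiceCDF F) : Rcurve F 1 = 0 := by simp [Rcurve, hF.one]

lemma Rcurve_pos (hF : NiceCDF F) {p : ℝ} (hp : 0 < p) (h1 : p < 1) : 0 < Rcurve F p :=
  mul_pos hp (by linarith [hF.Flt1 hp.le h1])

lemma derivR_zero (hF : NiceCDF F) (hRd : ∀ p ∈ Icc (0:ℝ) 1, DifferentiableAt ℝ (Rcurve F) p) :
    deriv (Rcurve F) 0 = 1 := by
  have h := (hRd 0 (left_mem_Icc.mpr zero_le_one)).hasDerivAt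
  rw [hasDerivAt_iff_tendsto_slope] at h
  have h2 : Tendsto (slope (Rcurve F) 0) (nhdsWithin 0 (Ioi 0)) (nhds (deriv (Rcurve F) 0)) :=
    h.mono_left (nhdsWithin_mono _ (fun x hx => ne_of_gt hx))
  have h3 : Tendsto (fun p => (1:ℝ) - F p) (nhdsWithin 0 (Ioi 0)) (nhds (1 - F 0)) :=
    Tendsto.mono_left (Continuous.tendsto (continuous_const.sub hF.cont) 0) nhdsWithin_le_nhds
  rw [hF.zero, sub_zero] at h3
  have heq : ∀ p ∈ Ioi (0:ℝ), slope (Rcurve F) 0 p = 1 - F p := by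
    intro p hp
    rw [slope_def_field, Rcurve_zero, Rcurve, sub_zero, sub_zero]
    exact mul_div_cancel_left₀ _ (ne_of_gt hp)
  refine tendsto_nhds_unique h2 (h3.congr' ?_)
  filter_upwards [self_mem_nhdsWithin] with p hp
  exact (heq p hp).symm

lemma derivR_one_neg (hF : NiceCDF F) (hcon : StrictConcaveOn ℝ (Icc (0:ℝ) 1) (Rcurve F))
    (hRd : ∀ p ∈ Icc (0:ℝ) 1, DifferentiableAt ℝ (Rcurve F) p) :
    deriv (Rcurve F) 1 < 0 := by
  have h := hcon.concaveOn.deriv_le_slope (x := (1:ℝ)/2) (y := 1)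
    (by constructor <;> norm_num) (right_mem_Icc.mpr zero_le_one) (by norm_num)
    (hRd 1 (right_mem_Icc.mpr zero_le_one))
  have hpos : 0 < Rcurve F (1/2) := Rcurve_pos hF (by norm_num) (by norm_num)
  rw [slope_def_field, Rcurve_one hF] at h
  calc deriv (Rcurve F) 1 ≤ (0 - Rcurve F (1/2)) / (1 - 1/2) := h
    _ < 0 := by rw [zero_sub]; apply div_neg_of_neg_of_pos (by linarith) (by norm_num)

lemma derivR_anti (hcon : StrictConcaveOn ℝ (Icc (0:ℝ) 1) (Rcurve F))
    (hRd : ∀ p ∈ Icc (0:ℝ) 1, DifferentiableAt ℝ (Rcurve F) p) :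
    StrictAntiOn (deriv (Rcurve F)) (Icc 0 1) := hcon.strictAntiOn_deriv hRd

/-- The linear-shifted revenue objective `(d-1)p + R(p)`. -/
def obj (F : ℝ → ℝ) (d : ℝ) : ℝ → ℝ := fun p => (d - 1) * p + Rcurve F p

lemma obj_concave (hcon : StrictConcaveOn ℝ (Icc (0:ℝ) 1) (Rcurve F)) (d : ℝ) :
    StrictConcaveOn ℝ (Icc (0:ℝ) 1) (obj F d) := by
  refine ⟨convex_Icc _ _, ?_⟩
  intro x hx y hy hxy aa bb ha hb hab
  have h := hcon.2 hx hy hxy ha hb hab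
  simp only [obj, smul_eq_mul] at *
  nlinarith [h]

lemma obj_cont (hF : NiceCDF F) (d : ℝ) : Continuous (obj F d) :=
  (continuous_const.mul continuous_id).add (Rcurve_cont hF)

lemma obj_hasDeriv (hRd : ∀ p ∈ Icc (0:ℝ) 1, DifferentiableAt ℝ (Rcurve F) p) (d : ℝ)
    {p : ℝ} (hp : p ∈ Icc (0:ℝ) 1) :
    HasDerivAt (obj F d) (d - 1 + deriv (Rcurve F) p) p := by
  have h1 : HasDerivAt (fun x : ℝ => (d - 1) * x) ((d-1) * 1) p :=
    (hasDerivAt_id p).const_mul (d - 1)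
  have := h1.add (hRd p hp).hasDerivAt
  simp only [mul_one] at this; exact this

lemma obj_exists_max (hF : NiceCDF F) (d : ℝ) :
    ∃ r ∈ Icc (0:ℝ) 1, IsMaxOn (obj F d) (Icc 0 1) r :=
  isCompact_Icc.exists_isMaxOn (nonempty_Icc.mpr zero_le_one) (obj_cont hF d).continuousOn

/-- A selected maximizer of `obj F d` over `[0,1]`. -/
def rsel (F : ℝ → ℝ) (d : ℝ) : ℝ :=
  if h : ∃ r ∈ Icc (0:ℝ) 1, IsMaxOn (obj F d) (Icc 0 1) r then h.choose else 0

lemma rsel_mem (hF : NiceCDF F) (d : ℝ) : rsel F d ∈ Icc (0:ℝ) 1 := by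
  have h := obj_exists_max hF d
  unfold rsel
  rw [dif_pos h]
  exact h.choose_spec.1

lemma rsel_isMaxOn (hF : NiceCDF F) (d : ℝ) : IsMaxOn (obj F d) (Icc 0 1) (rsel F d) := by
  have h := obj_exists_max hF d
  unfold rsel
  rw [dif_pos h]
  exact h.choose_spec.2

lemma maxpt_interior (hF : NiceCDF F) (hcon : StrictConcaveOn ℝ (Icc (0:ℝ) 1) (Rcurve F))
    (hRd : ∀ p ∈ Icc (0:ℝ) 1, DifferentiableAt ℝ (Rcurve F) p)
    {d : ℝ} (hd : d ∈ Ioo (0:ℝ) 1) {r : ℝ} (hr : r ∈ Icc (0:ℝ) 1)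
    (hmax : IsMaxOn (obj F d) (Icc 0 1) r) : r ∈ Ioo (0:ℝ) 1 := by
  constructor
  · rcases lt_or_eq_of_le hr.1 with h | h
    · exact h
    exfalso
    subst h
    -- r = 0 : derivative of obj at 0 is d > 0, contradiction with max at 0
    have hder : HasDerivAt (obj F d) d 0 := by
      have := obj_hasDeriv hRd d (left_mem_Icc.mpr zero_le_one)
      rwa [derivR_zero hF hRd, sub_add_cancel] at this
    rw [hasDerivAt_iff_tendsto_slope] at hder
    have h2 : Tendsto (slope (obj F d) 0) (nhdsWithin 0 (Ioi 0)) (nhds d) :=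
      hder.mono_left (nhdsWithin_mono _ (fun x hx => ne_of_gt hx))
    have h3 : ∀ᶠ p in nhdsWithin 0 (Ioi (0:ℝ)), 0 < slope (obj F d) 0 p :=
      h2.eventually (eventually_gt_nhds hd.1)
    have h4 : ∀ᶠ p in nhdsWithin 0 (Ioi (0:ℝ)), p ∈ Ioo (0:ℝ) 1 :=
      Ioo_mem_nhdsGT_of_mem ⟨le_refl 0, zero_lt_one⟩
    obtain ⟨p, hp1, hp2⟩ := (h3.and h4).exists
    rw [slope_def_field] at hp1
    have hle : obj F d p ≤ obj F d 0 := isMaxOn_iff.mp hmax p ⟨hp2.1.le, hp2.2.le⟩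
    have hppos : (0:ℝ) < p - 0 := by simpa using hp2.1
    rcases div_pos_iff.mp hp1 with ⟨hn, _⟩ | ⟨_, hdn⟩
    · linarith
    · linarith
  · rcases lt_or_eq_of_le hr.2 with h | h
    · exact h
    exfalso
    subst h
    -- r = 1 : derivative of obj at 1 is d - 1 + R'(1) < 0
    have hneg : d - 1 + deriv (Rcurve F) 1 < 0 := by
      have := derivR_one_neg hF hcon hRd
      linarith [hd.2]
    have hder := obj_hasDeriv hRd d (right_mem_Icc.mpr zero_le_one)
    rw [hasDerivAt_iff_tendsto_slope] at hder
    have h2 : Tendsto (slope (obj F d) 1) (nhdsWithin 1 (Iio 1)) (nhds (d - 1 + deriv (Rcurve F) 1)) :=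
      hder.mono_left (nhdsWithin_mono _ (fun x hx => ne_of_lt hx))
    have h3 : ∀ᶠ p in nhdsWithin 1 (Iio (1:ℝ)), slope (obj F d) 1 p < 0 :=
      h2.eventually (eventually_lt_nhds hneg)
    have h4 : ∀ᶠ p in nhdsWithin 1 (Iio (1:ℝ)), p ∈ Ioo (0:ℝ) 1 :=
      Ioo_mem_nhdsLT_of_mem ⟨zero_lt_one, le_refl 1⟩
    obtain ⟨p, hp1, hp2⟩ := (h3.and h4).exists
    rw [slope_def_field] at hp1
    have hle : obj F d p ≤ obj F d 1 := isMaxOn_iff.mp hmax p ⟨hp2.1.le, hp2.2.le⟩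
    have hpneg : p - 1 < 0 := by linarith [hp2.2]
    rcases div_neg_iff.mp hp1 with ⟨h5, h6⟩ | ⟨h5, h6⟩
    · linarith
    · linarith

lemma maxpt_deriv (hRd : ∀ p ∈ Icc (0:ℝ) 1, DifferentiableAt ℝ (Rcurve F) p)
    {d r : ℝ} (hr : r ∈ Ioo (0:ℝ) 1) (hmax : IsMaxOn (obj F d) (Icc 0 1) r) :
    deriv (Rcurve F) r = 1 - d := by
  have hloc : IsLocalMax (obj F d) r :=
    hmax.isLocalMax (Icc_mem_nhds hr.1 hr.2)
  have := hloc.hasDerivAt_eq_zero (obj_hasDeriv hRd d ⟨hr.1.le, hr.2.le⟩)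
  linarith

lemma deriv_isMaxOn (hcon : StrictConcaveOn ℝ (Icc (0:ℝ) 1) (Rcurve F))
    (hRd : ∀ p ∈ Icc (0:ℝ) 1, DifferentiableAt ℝ (Rcurve F) p)
    {d r : ℝ} (hr : r ∈ Ioo (0:ℝ) 1) (hd' : deriv (Rcurve F) r = 1 - d) :
    IsMaxOn (obj F d) (Icc 0 1) r := by
  have hrIcc : r ∈ Icc (0:ℝ) 1 := ⟨hr.1.le, hr.2.le⟩
  have hconc := (obj_concave hcon d).concaveOn
  have hderiv : HasDerivAt (obj F d) 0 r := by
    have := obj_hasDeriv hRd d hrIcc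
    rwa [hd', show d - 1 + (1 - d) = 0 by ring] at this
  intro y hy
  simp only [mem_setOf_eq]
  rcases lt_trichotomy y r with h | h | h
  · have h2 := hconc.le_slope_of_hasDerivAt hy hrIcc h hderiv
    rw [slope_def_field] at h2
    have hd : 0 < r - y := by linarith
    rcases div_nonneg_iff.mp h2 with ⟨hn, _⟩ | ⟨_, hdn⟩
    · linarith
    · linarith
  · rw [h]
  · have h2 := hconc.slope_le_of_hasDerivAt hrIcc hy h hderiv
    rw [slope_def_field] at h2
    have hd : 0 < y - r := by linarith
    rcases div_nonpos_iff.mp h2 with ⟨hn, hdn⟩ | ⟨hn, hdn⟩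
    · linarith
    · linarith

lemma maxpt_unique (hcon : StrictConcaveOn ℝ (Icc (0:ℝ) 1) (Rcurve F))
    {d x y : ℝ} (hx : x ∈ Icc (0:ℝ) 1) (hy : y ∈ Icc (0:ℝ) 1)
    (hmx : IsMaxOn (obj F d) (Icc 0 1) x) (hmy : IsMaxOn (obj F d) (Icc 0 1) y) : x = y := by
  by_contra hne
  have hmid : (1/2 : ℝ) • x + (1/2 : ℝ) • y ∈ Icc (0:ℝ) 1 :=
    (convex_Icc (0:ℝ) 1) hx hy (by norm_num) (by norm_num) (by norm_num)
  have h := (obj_concave hcon d).2 hx hy hne (by norm_num : (0:ℝ) < 1/2)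
    (by norm_num : (0:ℝ) < 1/2) (by norm_num)
  have h1 : obj F d ((1/2 : ℝ) • x + (1/2 : ℝ) • y) ≤ obj F d x := hmx hmid
  have h2 : obj F d y = obj F d x := le_antisymm (hmx hy) (hmy hx)
  simp only [smul_eq_mul] at h h1
  nlinarith [h, h1, h2]


lemma rsel_interior (hF : NiceCDF F) (hcon : StrictConcaveOn ℝ (Icc (0:ℝ) 1) (Rcurve F))
    (hRd : ∀ p ∈ Icc (0:ℝ) 1, DifferentiableAt ℝ (Rcurve F) p)
    {d : ℝ} (hd : d ∈ Ioo (0:ℝ) 1) : rsel F d ∈ Ioo (0:ℝ) 1 :=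
  maxpt_interior hF hcon hRd hd (rsel_mem hF d) (rsel_isMaxOn hF d)

lemma rsel_deriv (hF : NiceCDF F) (hcon : StrictConcaveOn ℝ (Icc (0:ℝ) 1) (Rcurve F))
    (hRd : ∀ p ∈ Icc (0:ℝ) 1, DifferentiableAt ℝ (Rcurve F) p)
    {d : ℝ} (hd : d ∈ Ioo (0:ℝ) 1) : deriv (Rcurve F) (rsel F d) = 1 - d :=
  maxpt_deriv hRd (rsel_interior hF hcon hRd hd) (rsel_isMaxOn hF d)

/-- The max value `W(d)` of the shifted objective. -/
def Wf (F : ℝ → ℝ) (d : ℝ) : ℝ := obj F d (rsel F d)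

lemma Wf_ge (hF : NiceCDF F) (d : ℝ) {p : ℝ} (hp : p ∈ Icc (0:ℝ) 1) : obj F d p ≤ Wf F d :=
  isMaxOn_iff.mp (rsel_isMaxOn hF d) p hp

lemma Wf_sub (hF : NiceCDF F) (d d' : ℝ) :
    Wf F d + (d' - d) * rsel F d ≤ Wf F d' := by
  have h := Wf_ge hF d' (rsel_mem hF d)
  have : obj F d' (rsel F d) = obj F d (rsel F d) + (d' - d) * rsel F d := by
    simp only [obj]; ring
  rw [this] at h
  exact h

lemma Wf_mono (hF : NiceCDF F) : Monotone (Wf F) := by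
  intro d d' hdd'
  have h := Wf_sub hF d d'
  have h2 : 0 ≤ (d' - d) * rsel F d :=
    mul_nonneg (by linarith) (rsel_mem hF d).1
  linarith

lemma Wf_lip (hF : NiceCDF F) (d d' : ℝ) : |Wf F d' - Wf F d| ≤ |d' - d| := by
  rcases le_total d d' with h | h
  · have h1 := Wf_sub hF d' d
    have h2 : (d - d') * rsel F d' ≥ (d - d') * 1 := by
      apply mul_le_mul_of_nonpos_left (rsel_mem hF d').2 (by linarith)
    have h3 : 0 ≤ Wf F d' - Wf F d := by linarith [Wf_mono hF h]
    rw [abs_of_nonneg h3, abs_of_nonneg (by linarith : (0:ℝ) ≤ d' - d)]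
    linarith
  · have h1 := Wf_sub hF d d'
    have h2 : (d' - d) * rsel F d ≥ (d' - d) * 1 := by
      apply mul_le_mul_of_nonpos_left (rsel_mem hF d).2 (by linarith)
    have h3 : Wf F d' - Wf F d ≤ 0 := by linarith [Wf_mono hF h]
    rw [abs_of_nonpos h3, abs_of_nonpos (by linarith : d' - d ≤ 0)]
    linarith

lemma Wf_cont (hF : NiceCDF F) : Continuous (Wf F) := by
  have : LipschitzWith 1 (Wf F) := by
    apply LipschitzWith.of_dist_le_mul
    intro x y
    rw [Real.dist_eq, Real.dist_eq, NNReal.coe_one, one_mul]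
    exact Wf_lip hF y x
  exact this.continuous

lemma Wf_strictMonoOn (hF : NiceCDF F) (hcon : StrictConcaveOn ℝ (Icc (0:ℝ) 1) (Rcurve F))
    (hRd : ∀ p ∈ Icc (0:ℝ) 1, DifferentiableAt ℝ (Rcurve F) p)
    {d d' : ℝ} (hd : d ∈ Ioo (0:ℝ) 1) (hdd' : d < d') : Wf F d < Wf F d' := by
  have h1 := Wf_sub hF d d'
  have h2 : 0 < (d' - d) * rsel F d :=
    mul_pos (by linarith) (rsel_interior hF hcon hRd hd).1
  linarith

lemma rsel_continuousAt (hF : NiceCDF F) (hcon : StrictConcaveOn ℝ (Icc (0:ℝ) 1) (Rcurve F))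
    (hRd : ∀ p ∈ Icc (0:ℝ) 1, DifferentiableAt ℝ (Rcurve F) p)
    {d0 : ℝ} (hd0 : d0 ∈ Ioo (0:ℝ) 1) : ContinuousAt (rsel F) d0 := by
  rw [Metric.continuousAt_iff]
  intro ε hε
  set r0 := rsel F d0 with hr0
  have hr0i : r0 ∈ Ioo (0:ℝ) 1 := rsel_interior hF hcon hRd hd0
  set ε1 : ℝ := min (ε/2) (min (r0/2) ((1 - r0)/2)) with hε1
  have hε1pos : 0 < ε1 := by
    apply lt_min (by linarith)
    apply lt_min (by linarith [hr0i.1]) (by linarith [hr0i.2])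
  have hlo : r0 - ε1 ∈ Icc (0:ℝ) 1 := by
    constructor
    · have : ε1 ≤ r0/2 := le_trans (min_le_right _ _) (min_le_left _ _)
      linarith [hr0i.1]
    · linarith [hr0i.2]
  have hhi : r0 + ε1 ∈ Icc (0:ℝ) 1 := by
    constructor
    · linarith [hr0i.1]
    · have : ε1 ≤ (1 - r0)/2 := le_trans (min_le_right _ _) (min_le_right _ _)
      linarith
  have hd0r : deriv (Rcurve F) r0 = 1 - d0 := rsel_deriv hF hcon hRd hd0
  have hgap1 : deriv (Rcurve F) r0 < deriv (Rcurve F) (r0 - ε1) :=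
    derivR_anti hcon hRd hlo ⟨hr0i.1.le, hr0i.2.le⟩ (by linarith)
  have hgap2 : deriv (Rcurve F) (r0 + ε1) < deriv (Rcurve F) r0 :=
    derivR_anti hcon hRd ⟨hr0i.1.le, hr0i.2.le⟩ hhi (by linarith)
  set δ : ℝ := min (min (deriv (Rcurve F) (r0 - ε1) - (1 - d0)) ((1 - d0) - deriv (Rcurve F) (r0 + ε1)))
    (min d0 (1 - d0)) with hδ
  have hδpos : 0 < δ := by
    apply lt_min (lt_min (by rw [← hd0r]; linarith) (by rw [← hd0r]; linarith))
    exact lt_min hd0.1 (by linarith [hd0.2])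
  refine ⟨δ, hδpos, ?_⟩
  intro d hdist
  rw [Real.dist_eq] at hdist
  have hd1 : |d - d0| < min d0 (1 - d0) := lt_of_lt_of_le hdist (min_le_right _ _)
  have hdIoo : d ∈ Ioo (0:ℝ) 1 := by
    rw [abs_sub_lt_iff] at hd1
    constructor
    · have := lt_of_lt_of_le hd1.2 (min_le_left d0 (1 - d0) : min d0 (1-d0) ≤ d0)
      linarith
    · have := lt_of_lt_of_le hd1.2 (min_le_right d0 (1 - d0))
      have h2 := hd1.1
      have := lt_of_lt_of_le hd1.1 (min_le_right d0 (1 - d0))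
      linarith
  have hrd : deriv (Rcurve F) (rsel F d) = 1 - d := rsel_deriv hF hcon hRd hdIoo
  have hri : rsel F d ∈ Ioo (0:ℝ) 1 := rsel_interior hF hcon hRd hdIoo
  have habs1 : |d - d0| < deriv (Rcurve F) (r0 - ε1) - (1 - d0) :=
    lt_of_lt_of_le hdist ((min_le_left _ _).trans (min_le_left _ _))
  have habs2 : |d - d0| < (1 - d0) - deriv (Rcurve F) (r0 + ε1) :=
    lt_of_lt_of_le hdist ((min_le_left _ _).trans (min_le_right _ _))
  rw [abs_sub_lt_iff] at habs1 habs2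
  -- 1 - d lies strictly between deriv at r0+ε1 and deriv at r0-ε1
  have hin1 : 1 - d < deriv (Rcurve F) (r0 - ε1) := by linarith [habs1.1, habs1.2]
  have hin2 : deriv (Rcurve F) (r0 + ε1) < 1 - d := by linarith [habs2.1, habs2.2]
  -- hence rsel F d ∈ (r0 - ε1, r0 + ε1)
  have hup : rsel F d < r0 + ε1 := by
    by_contra hc
    push_neg at hc
    rcases eq_or_lt_of_le hc with he | hlt
    · rw [he, hrd] at hin2; linarith
    · have := derivR_anti hcon hRd hhi ⟨hri.1.le, hri.2.le⟩ hlt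
      rw [hrd] at this; linarith
  have hdown : r0 - ε1 < rsel F d := by
    by_contra hc
    push_neg at hc
    rcases eq_or_lt_of_le hc with he | hlt
    · rw [← he, hrd] at hin1; linarith
    · have := derivR_anti hcon hRd ⟨hri.1.le, hri.2.le⟩ hlo hlt
      rw [hrd] at this; linarith
  rw [Real.dist_eq, abs_sub_lt_iff]
  have hε1ε : ε1 ≤ ε/2 := min_le_left _ _
  constructor <;> [skip; skip] <;> linarith

lemma Wf_hasDerivAt (hF : NiceCDF F) (hcon : StrictConcaveOn ℝ (Icc (0:ℝ) 1) (Rcurve F))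
    (hRd : ∀ p ∈ Icc (0:ℝ) 1, DifferentiableAt ℝ (Rcurve F) p)
    {d0 : ℝ} (hd0 : d0 ∈ Ioo (0:ℝ) 1) : HasDerivAt (Wf F) (rsel F d0) d0 := by
  rw [hasDerivAt_iff_tendsto_slope]
  have hbound : ∀ d : ℝ, d ≠ d0 →
      min (rsel F d0) (rsel F d) ≤ slope (Wf F) d0 d ∧
      slope (Wf F) d0 d ≤ max (rsel F d0) (rsel F d) := by
    intro d hd
    have h1 := Wf_sub hF d0 d
    have h2 := Wf_sub hF d d0
    rw [slope_def_field]
    rcases lt_or_gt_of_ne hd with h | h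
    -- d < d0
    · have hden : 0 < d0 - d := by linarith
      have hflip : (Wf F d - Wf F d0) / (d - d0) = (Wf F d0 - Wf F d) / (d0 - d) := by
        rw [← neg_sub (Wf F d0), ← neg_sub d0, neg_div_neg_eq]
      rw [hflip]
      constructor
      · rw [le_div_iff₀ hden]
        nlinarith [min_le_right (rsel F d0) (rsel F d)]
      · rw [div_le_iff₀ hden]
        nlinarith [le_max_left (rsel F d0) (rsel F d)]
    · have hden : 0 < d - d0 := by linarith
      constructor
      · rw [le_div_iff₀ hden]
        nlinarith [min_le_left (rsel F d0) (rsel F d)]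
      · rw [div_le_iff₀ hden]
        nlinarith [le_max_right (rsel F d0) (rsel F d)]
  have hcont : ContinuousAt (rsel F) d0 := rsel_continuousAt hF hcon hRd hd0
  have hmin : Tendsto (fun d => min (rsel F d0) (rsel F d)) (nhdsWithin d0 {d0}ᶜ) (nhds (rsel F d0)) := by
    have := (tendsto_const_nhds (x := rsel F d0) (f := nhdsWithin d0 ({d0}ᶜ : Set ℝ))).min
      (hcont.tendsto.mono_left nhdsWithin_le_nhds)
    simpa using this
  have hmax : Tendsto (fun d => max (rsel F d0) (rsel F d)) (nhdsWithin d0 {d0}ᶜ) (nhds (rsel F d0)) := by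
    have := (tendsto_const_nhds (x := rsel F d0) (f := nhdsWithin d0 ({d0}ᶜ : Set ℝ))).max
      (hcont.tendsto.mono_left nhdsWithin_le_nhds)
    simpa using this
  apply tendsto_of_tendsto_of_tendsto_of_le_of_le' hmin hmax
  · filter_upwards [self_mem_nhdsWithin] with d hd
    exact (hbound d hd).1
  · filter_upwards [self_mem_nhdsWithin] with d hd
    exact (hbound d hd).2


/-! ### Clamp extension gadget -/

/-- Extend a function on `[c,e]` to a strictly monotone surjection on `ℝ`. -/
def clampf (f : ℝ → ℝ) (c e : ℝ) : ℝ → ℝ :=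
  fun x => f (max c (min e x)) + (x - max c (min e x))

lemma clamp_mem {c e : ℝ} (hce : c ≤ e) (x : ℝ) : max c (min e x) ∈ Icc c e :=
  ⟨le_max_left _ _, max_le hce (min_le_left _ _)⟩

lemma clamp_eqid {c e x : ℝ} (hx : x ∈ Icc c e) : max c (min e x) = x := by
  rw [min_eq_right hx.2, max_eq_right hx.1]

lemma clamp_mono {c e x y : ℝ} (hxy : x ≤ y) : max c (min e x) ≤ max c (min e y) :=
  max_le_max (le_refl c) (min_le_min (le_refl e) hxy)

lemma clamp_sub_le {c e x y : ℝ} (hxy : x ≤ y) :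
    max c (min e y) - max c (min e x) ≤ y - x := by
  have h1 : min e y - min e x ≤ y - x := by
    rcases le_total e x with h | h
    · rw [min_eq_left h, min_eq_left (h.trans hxy)]; linarith
    · rw [min_eq_right h]
      have := min_le_right e y
      linarith
  rcases le_total (min e y) c with h | h
  · have h2 : min e x ≤ c := le_trans (min_le_min (le_refl e) hxy) h
    rw [max_eq_left h, max_eq_left h2]; linarith
  · rw [max_eq_right h]
    have := le_max_right c (min e x)
    linarith

lemma clampf_strictMono {f : ℝ → ℝ} {c e : ℝ} (hce : c ≤ e)
    (hsm : StrictMonoOn f (Icc c e)) : StrictMono (clampf f c e) := by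
  intro x y hxy
  have hkx := clamp_mem (c := c) (e := e) hce x
  have hky := clamp_mem (c := c) (e := e) hce y
  have hmono := clamp_mono (c := c) (e := e) hxy.le
  have hsub := clamp_sub_le (c := c) (e := e) hxy.le
  unfold clampf
  rcases eq_or_lt_of_le hmono with he' | hlt
  · rw [← he']
    linarith
  · have hf : f (max c (min e x)) < f (max c (min e y)) := hsm hkx hky hlt
    linarith

lemma clampf_continuous {f : ℝ → ℝ} {c e : ℝ} (hf : Continuous f) :
    Continuous (clampf f c e) := by
  have hk : Continuous fun x : ℝ => max c (min e x) :=
    continuous_const.max (continuous_const.min continuous_id)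
  exact (hf.comp hk).add (continuous_id.sub hk)

lemma clampf_surjective {f : ℝ → ℝ} {c e : ℝ} (hce : c ≤ e) (hf : Continuous f) :
    Function.Surjective (clampf f c e) := by
  intro y
  set x1 := min c (c + y - f c) with hx1def
  set x2 := max e (e + y - f e) with hx2def
  have hx1c : x1 ≤ c := min_le_left _ _
  have hx2e : e ≤ x2 := le_max_left _ _
  have hk1 : max c (min e x1) = c := by
    rw [max_eq_left (le_trans (min_le_right _ _) hx1c)]
  have hk2 : max c (min e x2) = e := by
    rw [min_eq_left hx2e, max_eq_right hce]
  have h1 : clampf f c e x1 ≤ y := by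
    unfold clampf; rw [hk1]
    have := min_le_right c (c + y - f c)
    linarith
  have h2 : y ≤ clampf f c e x2 := by
    unfold clampf; rw [hk2]
    have := le_max_right e (e + y - f e)
    linarith
  have hx12 : x1 ≤ x2 := le_trans hx1c (le_trans hce hx2e)
  have := intermediate_value_Icc hx12 (clampf_continuous (c := c) (e := e) hf).continuousOn
  obtain ⟨x, _, hx⟩ := this ⟨h1, h2⟩
  exact ⟨x, hx⟩

lemma clampf_eqOn {f : ℝ → ℝ} {c e x : ℝ} (hx : x ∈ Icc c e) : clampf f c e x = f x := by
  unfold clampf; rw [clamp_eqid hx]; ring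

/-! ### Positivity of the derivative of `F` -/

lemma F_diffAt (hRd : ∀ p ∈ Icc (0:ℝ) 1, DifferentiableAt ℝ (Rcurve F) p)
    {p : ℝ} (hp : p ∈ Ioo (0:ℝ) 1) : DifferentiableAt ℝ F p := by
  have h1 : DifferentiableAt ℝ (fun x => 1 - Rcurve F x / x) p := by
    apply (differentiableAt_const (1:ℝ)).sub
    exact (hRd p ⟨hp.1.le, hp.2.le⟩).div differentiableAt_id (ne_of_gt hp.1)
  apply h1.congr_of_eventuallyEq
  filter_upwards [eventually_ne_nhds (ne_of_gt hp.1)] with x hx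
  rw [Rcurve, mul_comm, mul_div_assoc, div_self hx, mul_one]
  ring

lemma derivF_nonneg (hF : NiceCDF F)
    (hRd : ∀ p ∈ Icc (0:ℝ) 1, DifferentiableAt ℝ (Rcurve F) p)
    {p : ℝ} (hp : p ∈ Ioo (0:ℝ) 1) : 0 ≤ deriv F p := by
  have h := (F_diffAt hRd hp).hasDerivAt
  rw [hasDerivAt_iff_tendsto_slope] at h
  have h2 : Tendsto (slope F p) (nhdsWithin p (Ioi p)) (nhds (deriv F p)) :=
    h.mono_left (nhdsWithin_mono _ (fun x hx => ne_of_gt hx))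
  refine ge_of_tendsto h2 ?_
  filter_upwards [Ioo_mem_nhdsGT_of_mem ⟨le_refl p, hp.2⟩] with y hy
  rw [slope_def_field]
  apply div_nonneg _ (by linarith [hy.1])
  have := hF.FmonoOn ⟨hp.1.le, hp.2.le⟩ ⟨by linarith [hp.1, hy.1], hy.2.le⟩ hy.1.le
  linarith

lemma H_strictConvexOn (hcon : StrictConcaveOn ℝ (Icc (0:ℝ) 1) (Rcurve F))
    {s : Set ℝ} (hs : Convex ℝ s) (hsub : s ⊆ Icc (0:ℝ) 1) :
    StrictConvexOn ℝ s (fun p : ℝ => p * F p) := by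
  refine ⟨hs, ?_⟩
  intro x hx y hy hxy aa bb ha hb hab
  have h := hcon.2 (hsub hx) (hsub hy) hxy ha hb hab
  simp only [Rcurve, smul_eq_mul] at *
  nlinarith [h]

lemma H_hasDerivAt (hRd : ∀ p ∈ Icc (0:ℝ) 1, DifferentiableAt ℝ (Rcurve F) p)
    {p : ℝ} (hp : p ∈ Ioo (0:ℝ) 1) :
    HasDerivAt (fun x : ℝ => x * F x) (F p + p * deriv F p) p := by
  have := (hasDerivAt_id' p).mul (F_diffAt hRd hp).hasDerivAt
  rw [one_mul] at this; exact this

lemma derivF_pos (hF : NiceCDF F) (hcon : StrictConcaveOn ℝ (Icc (0:ℝ) 1) (Rcurve F))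
    (hRd : ∀ p ∈ Icc (0:ℝ) 1, DifferentiableAt ℝ (Rcurve F) p)
    {p0 : ℝ} (hp0 : p0 ∈ Ioo (0:ℝ) 1) : 0 < deriv F p0 := by
  rcases (derivF_nonneg hF hRd hp0).lt_or_eq with h | h
  · exact h
  exfalso
  have hsubI : Icc (p0/2) p0 ⊆ Icc (0:ℝ) 1 := by
    intro x hx
    constructor
    · linarith [hx.1, hp0.1]
    · linarith [hx.2, hp0.2]
  have hsubO : Icc (p0/2) p0 ⊆ Ioo (0:ℝ) 1 := by
    intro x hx
    constructor
    · linarith [hx.1, hp0.1]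
    · exact lt_of_le_of_lt hx.2 hp0.2
  have Hmono : StrictMonoOn (deriv (fun x : ℝ => x * F x)) (Icc (p0/2) p0) :=
    (H_strictConvexOn hcon (convex_Icc _ _) hsubI).strictMonoOn_deriv
      (fun x hx => ((H_hasDerivAt hRd (hsubO hx)).differentiableAt))
  have hd0 : deriv (fun x : ℝ => x * F x) p0 = F p0 := by
    rw [(H_hasDerivAt hRd hp0).deriv, ← h]
    ring
  have hkey : ∀ p ∈ Ioo (p0/2) p0, F p + p * deriv F p < F p0 := by
    intro p hp
    have hpI : p ∈ Icc (p0/2) p0 := ⟨hp.1.le, hp.2.le⟩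
    have h1 := Hmono hpI (right_mem_Icc.mpr (by linarith [hp0.1])) hp.2
    rw [hd0, (H_hasDerivAt hRd (hsubO hpI)).deriv] at h1
    exact h1
  set c : ℝ := 2 / p0 with hc
  set v : ℝ → ℝ := fun p => (F p0 - F p) * Real.exp (c * p) with hv
  have hvd : ∀ p ∈ Ioo (p0/2) p0,
      HasDerivAt v ((-(deriv F p) + c * (F p0 - F p)) * Real.exp (c * p)) p := by
    intro p hp
    have hu : HasDerivAt (fun x => F p0 - F x) (-(deriv F p)) p := by
      have := (hasDerivAt_const p (F p0)).sub (F_diffAt hRd (hsubO ⟨hp.1.le, hp.2.le⟩)).hasDerivAt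
      simp only [zero_sub] at this; exact this
    have he : HasDerivAt (fun x : ℝ => Real.exp (c * x)) (Real.exp (c * p) * c) p := by
      have := ((hasDerivAt_id p).const_mul c).exp
      simpa [mul_comm] using this
    have := hu.mul he
    have e : (-(deriv F p) + c * (F p0 - F p)) * Real.exp (c * p) = -(deriv F p) * Real.exp (c * p) + (F p0 - F p) * (Real.exp (c * p) * c) := by ring
    rw [e]; exact this
  have hvpos : ∀ p ∈ Ioo (p0/2) p0, 0 < (-(deriv F p) + c * (F p0 - F p)) * Real.exp (c * p) := by
    intro p hp
    have hpI : p ∈ Ioo (0:ℝ) 1 := hsubO ⟨hp.1.le, hp.2.le⟩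
    have hu : 0 < F p0 - F p := by
      have := hF.mono ⟨hpI.1.le, hpI.2.le⟩ ⟨hp0.1.le, hp0.2.le⟩ hp.2
      linarith
    have hkey2 := hkey p hp
    have hppos : 0 < p := hpI.1
    have hcine : 1 / p < c := by
      rw [hc, div_lt_div_iff₀ hppos hp0.1]
      linarith [hp.1]
    have hderiv_lt : deriv F p < (F p0 - F p) / p := by
      rw [lt_div_iff₀ hppos]
      nlinarith [hkey2]
    have h1p : 1 < c * p := by
      rw [div_lt_iff₀ hppos] at hcine
      linarith
    have : (F p0 - F p) / p < c * (F p0 - F p) := by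
      rw [div_lt_iff₀ hppos]
      nlinarith [mul_lt_mul_of_pos_left h1p hu]
    apply mul_pos _ (Real.exp_pos _)
    linarith
  have hvmono : StrictMonoOn v (Icc (p0/2) p0) := by
    apply strictMonoOn_of_deriv_pos (convex_Icc _ _)
    · apply Continuous.continuousOn
      exact ((continuous_const.sub hF.cont).mul (Real.continuous_exp.comp (continuous_const.mul continuous_id)))
    · intro x hx
      rw [interior_Icc] at hx
      rw [(hvd x hx).deriv]
      exact hvpos x hx
  have hlt := hvmono (left_mem_Icc.mpr (by linarith [hp0.1])) (right_mem_Icc.mpr (by linarith [hp0.1]))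
    (by linarith [hp0.1])
  have hv0 : v p0 = 0 := by simp [hv]
  have hvhalf : 0 < v (p0/2) := by
    apply mul_pos _ (Real.exp_pos _)
    have h01 := hp0.1
    have h02 := hp0.2
    have := hF.mono (show p0/2 ∈ Icc (0:ℝ) 1 from ⟨by linarith, by linarith⟩)
      (show p0 ∈ Icc (0:ℝ) 1 from ⟨by linarith, by linarith⟩) (by linarith)
    linarith
  rw [hv0] at hlt
  linarith



lemma deriv_nonneg_of_le_on_left {f : ℝ → ℝ} {x γ : ℝ} (hx : HasDerivAt f γ x) {l : ℝ}
    (hl : l < x) (hle : ∀ p ∈ Ioo l x, f p ≤ f x) : 0 ≤ γ := by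
  rw [hasDerivAt_iff_tendsto_slope] at hx
  have h2 : Tendsto (slope f x) (nhdsWithin x (Iio x)) (nhds γ) :=
    hx.mono_left (nhdsWithin_mono _ (fun z hz => ne_of_lt hz))
  refine ge_of_tendsto h2 ?_
  filter_upwards [Ioo_mem_nhdsLT_of_mem ⟨hl, le_refl x⟩] with p hp
  rw [slope_def_field]
  apply div_nonneg_of_nonpos
  · linarith [hle p hp]
  · linarith [hp.2]

lemma deriv_nonpos_of_le_on_right {f : ℝ → ℝ} {x γ : ℝ} (hx : HasDerivAt f γ x) {u : ℝ}
    (hu : x < u) (hle : ∀ p ∈ Ioo x u, f p ≤ f x) : γ ≤ 0 := by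
  rw [hasDerivAt_iff_tendsto_slope] at hx
  have h2 : Tendsto (slope f x) (nhdsWithin x (Ioi x)) (nhds γ) :=
    hx.mono_left (nhdsWithin_mono _ (fun z hz => ne_of_gt hz))
  refine le_of_tendsto h2 ?_
  filter_upwards [Ioo_mem_nhdsGT_of_mem ⟨le_refl x, hu⟩] with p hp
  rw [slope_def_field]
  apply div_nonpos_of_nonpos_of_nonneg
  · linarith [hle p hp]
  · linarith [hp.1]



/-! ### The extraction lemma: structure of sophisticated-focused continuations -/

lemma div_cancel_eq {x y d : ℝ} (hd : 0 < d) (h : x / d = y / d) : x = y := by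
  have h2 := congrArg (fun z => z * d) h
  simpa [div_mul_cancel₀, hd.ne'] using h2

set_option maxHeartbeats 1000000 in
lemma extraction (hF : NiceCDF F) (hcon : StrictConcaveOn ℝ (Icc (0:ℝ) 1) (Rcurve F))
    (hRd : ∀ p ∈ Icc (0:ℝ) 1, DifferentiableAt ℝ (Rcurve F) p)
    {t : ℝ} (ht : t ∈ Ioo (0:ℝ) 1)
    {μ p1 : ℝ} (hμ0 : 0 ≤ μ) (hμ1 : μ < 1) (hp1 : p1 ∈ Ioc (0:ℝ) 1)
    {p2R p2A : Measure ℝ} (hc : Continuation F μ p1 p2R p2A t) (hsf : SophFocused p2A t) :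
    0 < μ ∧ ∃ a b : ℝ, a ∈ Ioo 0 p1 ∧ b ∈ Ioo p1 t ∧
      deriv (Rcurve F) a = 1 - (μ * F t + (1 - μ) * F p1) ∧
      deriv (Rcurve F) b = 1 - F t ∧
      (μ * F t + (1 - μ) * F p1 - 1) * a + Rcurve F a
        = μ * ((F t - 1) * b + Rcurve F b) := by
  classical
  obtain ⟨aA, hA, htaA⟩ := hsf
  haveI : IsProbabilityMeasure p2R := hc.probR
  have hFt : 0 < F t := hF.Fpos ht.1 ht.2.le
  have hFt1 : F t < 1 := hF.Flt1 ht.1.le ht.2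
  have hFp1 : 0 < F p1 := hF.Fpos hp1.1 hp1.2
  have hDpos : 0 < μ * F t + (1 - μ) * F p1 := hc.denR_pos
  set D := μ * F t + (1 - μ) * F p1 with hD
  -- the indifference equation gives t - p1 = ∫ (t - x)⁺ dp2R
  have hind : t - p1 = ∫ x, max (t - x) 0 ∂p2R := by
    have h := hc.indiff
    rw [hA, integral_dirac] at h
    rw [max_eq_right (by linarith : t - aA ≤ 0)] at h
    linarith
  have hIge : 0 ≤ ∫ x, max (t - x) 0 ∂p2R :=
    integral_nonneg (fun x => le_max_right _ _)
  have hp1t : p1 ≤ t := by linarith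
  have hFp1t : F p1 ≤ F t :=
    hF.FmonoOn ⟨hp1.1.le, hp1.2⟩ ⟨ht.1.le, ht.2.le⟩ hp1t
  have hDle : D ≤ F t := by rw [hD]; nlinarith
  have hD1 : D < 1 := lt_of_le_of_lt hDle hFt1
  -- piecewise formulas for Rrej
  have hlow : ∀ p, 0 ≤ p → p ≤ p1 →
      Rrej F μ p1 t p = ((D - 1) * p + Rcurve F p) / D := by
    intro p h0 h1
    have hFp1' : F p ≤ F p1 :=
      hF.FmonoOn ⟨h0, h1.trans hp1.2⟩ ⟨hp1.1.le, hp1.2⟩ h1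
    have hFpt : F p ≤ F t := hFp1'.trans hFp1t
    unfold Rrej FrejCDF Fle muR
    rw [min_eq_left ((div_le_one hFt).mpr hFpt),
      min_eq_left ((div_le_one hFp1).mpr hFp1'), Rcurve, hD]
    field_simp [show μ * F t + (1 - μ) * F p1 ≠ 0 from hDpos.ne']
    ring
  have hmid : ∀ p, p1 ≤ p → p ≤ t →
      Rrej F μ p1 t p = μ * ((F t - 1) * p + Rcurve F p) / D := by
    intro p h0 h1
    have hp0 : (0:ℝ) ≤ p := le_trans hp1.1.le h0
    have hpmem : p ∈ Icc (0:ℝ) 1 := ⟨hp0, h1.trans ht.2.le⟩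
    have hFp1' : F p1 ≤ F p :=
      hF.FmonoOn ⟨hp1.1.le, hp1.2⟩ hpmem h0
    have hFpt : F p ≤ F t := hF.FmonoOn hpmem ⟨ht.1.le, ht.2.le⟩ h1
    unfold Rrej FrejCDF Fle muR
    rw [min_eq_left ((div_le_one hFt).mpr hFpt),
      min_eq_right ((one_le_div hFp1).mpr hFp1'), Rcurve, hD]
    field_simp
    ring
  have hhi : ∀ p, t ≤ p → p ≤ 1 → Rrej F μ p1 t p = 0 := by
    intro p h0 h1
    have hpmem : p ∈ Icc (0:ℝ) 1 := ⟨le_trans ht.1.le h0, h1⟩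
    have hFpt : F t ≤ F p := hF.FmonoOn ⟨ht.1.le, ht.2.le⟩ hpmem h0
    have hFpp1 : F p1 ≤ F p := hFp1t.trans hFpt
    unfold Rrej FrejCDF Fle muR
    rw [min_eq_right ((one_le_div hFt).mpr hFpt),
      min_eq_right ((one_le_div hFp1).mpr hFpp1)]
    simp
  -- a point with positive revenue
  have hstar : ∃ q : ℝ, q ∈ Ioo 0 p1 ∧ 0 < Rrej F μ p1 t q := by
    have h0 : Tendsto F (nhds 0) (nhds 0) := by
      have := hF.cont.continuousAt (x := 0)
      rwa [ContinuousAt, hF.zero] at this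
    have h1 : ∀ᶠ q in nhdsWithin 0 (Ioi 0), F q < D :=
      (h0.eventually (eventually_lt_nhds hDpos)).filter_mono nhdsWithin_le_nhds
    have h2 : ∀ᶠ q in nhdsWithin 0 (Ioi (0:ℝ)), q ∈ Ioo 0 p1 :=
      Ioo_mem_nhdsGT_of_mem ⟨le_refl 0, hp1.1⟩
    obtain ⟨q, hq1, hq2⟩ := (h1.and h2).exists
    refine ⟨q, hq2, ?_⟩
    rw [hlow q hq2.1.le hq2.2.le]
    apply div_pos _ hDpos
    rw [Rcurve]
    nlinarith [hq2.1]
  obtain ⟨q, hqmem, hqpos⟩ := hstar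
  have hqIcc : q ∈ Icc (0:ℝ) 1 := ⟨hqmem.1.le, (hqmem.2.trans_le hp1.2).le⟩
  have hsupp_pos : ∀ y ∈ msupp p2R, 0 < Rrej F μ p1 t y := by
    intro y hy
    exact lt_of_lt_of_le hqpos (isMaxOn_iff.mp (hc.optR y hy) q hqIcc)
  have hsupp_Ioo : ∀ y ∈ msupp p2R, y ∈ Ioo (0:ℝ) t := by
    intro y hy
    have hyIcc := hc.suppR01 hy
    have hypos := hsupp_pos y hy
    constructor
    · rcases lt_or_eq_of_le hyIcc.1 with h | h
      · exact h
      · exfalso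
        rw [← h] at hypos
        simp [Rrej] at hypos
    · by_contra hc2
      push_neg at hc2
      rw [hhi y hc2 hyIcc.2] at hypos
      exact lt_irrefl 0 hypos
  -- p1 is not in the support
  have hp1_not : p1 ∉ msupp p2R := by
    intro hmem
    have hp1lt : p1 < t := by
      rcases lt_or_eq_of_le hp1t with h | h
      · exact h
      · exfalso
        have := hsupp_pos p1 hmem
        rw [hhi p1 h.ge hp1.2] at this
        exact lt_irrefl 0 this
    have hmax := isMaxOn_iff.mp (hc.optR p1 hmem)
    rcases eq_or_lt_of_le hμ0 with hμz | hμpos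
    · -- μ = 0 : revenue at p1 vanishes
      have := hsupp_pos p1 hmem
      rw [hmid p1 (le_refl p1) hp1t, ← hμz] at this
      simp at this
    · -- kink argument
      have hle_left : ∀ p ∈ Ioo (0:ℝ) p1, obj F D p ≤ obj F D p1 := by
        intro p hp
        have h1 := hmax p ⟨hp.1.le, hp.2.le.trans hp1.2⟩
        rw [hlow p hp.1.le hp.2.le, hlow p1 hp1.1.le (le_refl p1)] at h1
        have := (div_le_div_iff_of_pos_right hDpos).mp h1
        exact this
      have hle_right : ∀ p ∈ Ioo p1 t, obj F (F t) p ≤ obj F (F t) p1 := by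
        intro p hp
        have h1 := hmax p ⟨hp1.1.le.trans hp.1.le, hp.2.le.trans ht.2.le⟩
        rw [hmid p hp.1.le hp.2.le, hmid p1 (le_refl p1) hp1t] at h1
        have h2 : μ * ((F t - 1) * p + Rcurve F p) ≤ μ * ((F t - 1) * p1 + Rcurve F p1) := by
          have := (div_le_div_iff_of_pos_right hDpos).mp h1
          exact this
        have := (mul_le_mul_iff_right₀ hμpos).mp h2
        simp only [obj]
        linarith
      have hd1 : 0 ≤ D - 1 + deriv (Rcurve F) p1 := by
        apply deriv_nonneg_of_le_on_left (obj_hasDeriv hRd D ⟨hp1.1.le, hp1.2⟩) hp1.1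
        intro p hp
        exact hle_left p hp
      have hd2 : F t - 1 + deriv (Rcurve F) p1 ≤ 0 := by
        apply deriv_nonpos_of_le_on_right (obj_hasDeriv hRd (F t) ⟨hp1.1.le, hp1.2⟩) hp1lt
        intro p hp
        exact hle_right p hp
      have hFlt : F p1 < F t :=
        hF.mono ⟨hp1.1.le, hp1.2⟩ ⟨ht.1.le, ht.2.le⟩ hp1lt
      have : D < F t := by rw [hD]; nlinarith
      linarith
  -- at most one support point on each side
  have hP1uniq : ∀ y ∈ msupp p2R ∩ Ioo 0 p1, ∀ y' ∈ msupp p2R ∩ Ioo 0 p1, y = y' := by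
    intro y hy y' hy'
    by_contra hne
    have hyIcc := hc.suppR01 hy.1
    have hy'Icc := hc.suppR01 hy'.1
    have heq : Rrej F μ p1 t y = Rrej F μ p1 t y' :=
      le_antisymm (isMaxOn_iff.mp (hc.optR y' hy'.1) y hyIcc)
        (isMaxOn_iff.mp (hc.optR y hy.1) y' hy'Icc)
    have hobj : obj F D y = obj F D y' := by
      have h1 := heq
      rw [hlow y hy.2.1.le hy.2.2.le, hlow y' hy'.2.1.le hy'.2.2.le] at h1
      have := div_cancel_eq hDpos h1
      simpa [obj] using this
    have hmidpt := (obj_concave hcon D).2 hyIcc hy'Icc hne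
      (by norm_num : (0:ℝ) < 1/2) (by norm_num : (0:ℝ) < 1/2) (by norm_num)
    set m : ℝ := (1/2 : ℝ) • y + (1/2 : ℝ) • y' with hm
    have hmIoo : m ∈ Ioo (0:ℝ) p1 := by
      rw [hm]; simp only [smul_eq_mul]
      constructor
      · nlinarith [hy.2.1, hy'.2.1]
      · nlinarith [hy.2.2, hy'.2.2]
    have hmle : Rrej F μ p1 t m ≤ Rrej F μ p1 t y :=
      isMaxOn_iff.mp (hc.optR y hy.1) m ⟨hmIoo.1.le, hmIoo.2.le.trans hp1.2⟩
    rw [hlow m hmIoo.1.le hmIoo.2.le, hlow y hy.2.1.le hy.2.2.le] at hmle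
    have hmle2 : obj F D m ≤ obj F D y := by
      have := (div_le_div_iff_of_pos_right hDpos).mp hmle
      exact this
    simp only [smul_eq_mul, obj] at hmidpt hmle2 hobj
    clear_value m D
    linarith [hmidpt, hmle2, hobj]
  -- establish μ > 0
  have hμpos : 0 < μ := by
    rcases eq_or_lt_of_le hμ0 with hμz | h
    · exfalso
      -- all support is in (0, p1), and it is a single point
      have hsub1 : msupp p2R ⊆ Ioo 0 p1 := by
        intro y hy
        have hIoo := hsupp_Ioo y hy
        have hyIcc := hc.suppR01 hy
        rcases lt_trichotomy y p1 with h1 | h1 | h1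
        · exact ⟨hIoo.1, h1⟩
        · exact absurd (h1 ▸ hy) hp1_not
        · exfalso
          have := hsupp_pos y hy
          rw [hmid y h1.le hIoo.2.le, ← hμz] at this
          simp at this
      obtain ⟨y0, hy0⟩ := msupp_nonempty p2R
      have hsingle : msupp p2R ⊆ {y0} := by
        intro y hy
        have := hP1uniq y ⟨hy, hsub1 hy⟩ y0 ⟨hy0, hsub1 hy0⟩
        simpa using this
      have hy0mem := hsub1 hy0
      have hintegral := msupp_single_integral hsingle
        (f := fun x => max (t - x) 0)
        ((continuous_const.sub continuous_id).max continuous_const)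
      rw [hintegral] at hind
      have hmaxeq : max (t - y0) 0 = t - y0 := max_eq_left (by linarith [hy0mem.2])
      simp only [hmaxeq] at hind
      linarith [hy0mem.2]
    · exact h
  have hP2uniq : ∀ y ∈ msupp p2R ∩ Ioo p1 t, ∀ y' ∈ msupp p2R ∩ Ioo p1 t, y = y' := by
    intro y hy y' hy'
    by_contra hne
    have hyIcc := hc.suppR01 hy.1
    have hy'Icc := hc.suppR01 hy'.1
    have heq : Rrej F μ p1 t y = Rrej F μ p1 t y' :=
      le_antisymm (isMaxOn_iff.mp (hc.optR y' hy'.1) y hyIcc)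
        (isMaxOn_iff.mp (hc.optR y hy.1) y' hy'Icc)
    have hobj : obj F (F t) y = obj F (F t) y' := by
      have h1 := heq
      rw [hmid y hy.2.1.le hy.2.2.le, hmid y' hy'.2.1.le hy'.2.2.le] at h1
      have h2 := div_cancel_eq hDpos h1
      have := (mul_left_cancel₀ hμpos.ne') h2
      simpa [obj] using this
    have hmidpt := (obj_concave hcon (F t)).2 hyIcc hy'Icc hne
      (by norm_num : (0:ℝ) < 1/2) (by norm_num : (0:ℝ) < 1/2) (by norm_num)
    set m : ℝ := (1/2 : ℝ) • y + (1/2 : ℝ) • y' with hm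
    have hmIoo : m ∈ Ioo p1 t := by
      rw [hm]; simp only [smul_eq_mul]
      constructor
      · nlinarith [hy.2.1, hy'.2.1]
      · nlinarith [hy.2.2, hy'.2.2]
    have hmle : Rrej F μ p1 t m ≤ Rrej F μ p1 t y :=
      isMaxOn_iff.mp (hc.optR y hy.1) m
        ⟨hp1.1.le.trans hmIoo.1.le, hmIoo.2.le.trans ht.2.le⟩
    rw [hmid m hmIoo.1.le hmIoo.2.le, hmid y hy.2.1.le hy.2.2.le] at hmle
    have hmle2 : obj F (F t) m ≤ obj F (F t) y := by
      have h2 := (div_le_div_iff_of_pos_right hDpos).mp hmle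
      have := (mul_le_mul_iff_right₀ hμpos).mp h2
      simpa [obj] using this
    simp only [smul_eq_mul, obj] at hmidpt hmle2 hobj
    clear_value m D
    linarith [hmidpt, hmle2, hobj]
  refine ⟨hμpos, ?_⟩
  -- support splits into the two sides
  have hsplit : ∀ y ∈ msupp p2R, y ∈ Ioo (0:ℝ) p1 ∨ y ∈ Ioo p1 t := by
    intro y hy
    have hIoo := hsupp_Ioo y hy
    rcases lt_trichotomy y p1 with h1 | h1 | h1
    · exact Or.inl ⟨hIoo.1, h1⟩
    · exact absurd (h1 ▸ hy) hp1_not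
    · exact Or.inr ⟨h1, hIoo.2⟩
  by_cases hL : (msupp p2R ∩ Ioo 0 p1).Nonempty
  · by_cases hR : (msupp p2R ∩ Ioo p1 t).Nonempty
    · -- main case : two support points
      obtain ⟨a, ha⟩ := hL
      obtain ⟨b, hb⟩ := hR
      have haIcc := hc.suppR01 ha.1
      have hbIcc := hc.suppR01 hb.1
      -- derivative condition at a
      have hderiva : deriv (Rcurve F) a = 1 - D := by
        have hloc : IsLocalMax (obj F D) a := by
          filter_upwards [Ioo_mem_nhds ha.2.1 ha.2.2] with p hp
          have h1 := isMaxOn_iff.mp (hc.optR a ha.1) p ⟨hp.1.le, hp.2.le.trans hp1.2⟩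
          rw [hlow p hp.1.le hp.2.le, hlow a ha.2.1.le ha.2.2.le] at h1
          have := (div_le_div_iff_of_pos_right hDpos).mp h1
          exact this
        have := hloc.hasDerivAt_eq_zero (obj_hasDeriv hRd D ⟨ha.2.1.le, haIcc.2⟩)
        linarith
      have hderivb : deriv (Rcurve F) b = 1 - F t := by
        have hloc : IsLocalMax (obj F (F t)) b := by
          filter_upwards [Ioo_mem_nhds hb.2.1 hb.2.2] with p hp
          have h1 := isMaxOn_iff.mp (hc.optR b hb.1) p
            ⟨hp1.1.le.trans hp.1.le, hp.2.le.trans ht.2.le⟩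
          rw [hmid p hp.1.le hp.2.le, hmid b hb.2.1.le hb.2.2.le] at h1
          have h2 := (div_le_div_iff_of_pos_right hDpos).mp h1
          have := (mul_le_mul_iff_right₀ hμpos).mp h2
          exact this
        have := hloc.hasDerivAt_eq_zero (obj_hasDeriv hRd (F t) ⟨hp1.1.le.trans hb.2.1.le, hbIcc.2⟩)
        linarith
      -- equal values
      have hvals : (D - 1) * a + Rcurve F a = μ * ((F t - 1) * b + Rcurve F b) := by
        have heq : Rrej F μ p1 t a = Rrej F μ p1 t b :=
          le_antisymm (isMaxOn_iff.mp (hc.optR b hb.1) a haIcc)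
            (isMaxOn_iff.mp (hc.optR a ha.1) b hbIcc)
        rw [hlow a ha.2.1.le ha.2.2.le, hmid b hb.2.1.le hb.2.2.le] at heq
        have := div_cancel_eq hDpos heq
        exact this
      exact ⟨a, b, ha.2, hb.2, hderiva, hderivb, hvals⟩
    · -- only the left side : single support point, contradiction
      exfalso
      rw [not_nonempty_iff_eq_empty] at hR
      obtain ⟨y0, hy0⟩ := msupp_nonempty p2R
      have hy0L : y0 ∈ Ioo (0:ℝ) p1 := by
        rcases hsplit y0 hy0 with h | h
        · exact h
        · exact absurd (mem_inter hy0 h) (hR ▸ notMem_empty y0)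
      have hsingle : msupp p2R ⊆ {y0} := by
        intro y hy
        have hyL : y ∈ Ioo (0:ℝ) p1 := by
          rcases hsplit y hy with h | h
          · exact h
          · exact absurd (mem_inter hy h) (hR ▸ notMem_empty y)
        have := hP1uniq y ⟨hy, hyL⟩ y0 ⟨hy0, hy0L⟩
        simpa using this
      have hintegral := msupp_single_integral hsingle
        (f := fun x => max (t - x) 0)
        ((continuous_const.sub continuous_id).max continuous_const)
      rw [hintegral] at hind
      have hmaxeq : max (t - y0) 0 = t - y0 := max_eq_left (by linarith [hy0L.2])
      simp only [hmaxeq] at hind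
      linarith [hy0L.2]
  · -- no left support point : single support point on the right, contradiction
    exfalso
    rw [not_nonempty_iff_eq_empty] at hL
    obtain ⟨y0, hy0⟩ := msupp_nonempty p2R
    have hy0R : y0 ∈ Ioo p1 t := by
      rcases hsplit y0 hy0 with h | h
      · exact absurd (mem_inter hy0 h) (hL ▸ notMem_empty y0)
      · exact h
    have hsingle : msupp p2R ⊆ {y0} := by
      intro y hy
      have hyR : y ∈ Ioo p1 t := by
        rcases hsplit y hy with h | h
        · exact absurd (mem_inter hy h) (hL ▸ notMem_empty y)
        · exact h
      have := hP2uniq y ⟨hy, hyR⟩ y0 ⟨hy0, hy0R⟩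
      simpa using this
    have hintegral := msupp_single_integral hsingle
      (f := fun x => max (t - x) 0)
      ((continuous_const.sub continuous_id).max continuous_const)
    rw [hintegral] at hind
    have hmaxeq : max (t - y0) 0 = t - y0 := max_eq_left (by linarith [hy0R.2])
    simp only [hmaxeq] at hind
    linarith [hy0R.1]



set_option maxHeartbeats 1000000 in
/-- **Lemma: monotonicity of the implementing first-round price.**
Fix `t ∈ (0,1)`. Let `g μ = p1(t,μ)` be a function giving, for every `μ` in
`S = {μ ∈ [0,1) : (1-μ) R'(t) + (1 - F t) μ ≥ 0}`, the (unique) first-round price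
of a sophisticated-focused implementation of `t` at sophistication `μ`. Then `g`
is differentiable and strictly increasing on `S`. -/
theorem implementing_p1_differentiable_strictMono
    (F : ℝ → ℝ) (hF : NiceCDF F)
    (hcon : StrictConcaveOn ℝ (Icc (0:ℝ) 1) (Rcurve F))
    (hRd : ∀ p ∈ Icc (0:ℝ) 1, DifferentiableAt ℝ (Rcurve F) p)
    (t : ℝ) (ht : t ∈ Ioo (0:ℝ) 1)
    (S : Set ℝ)
    (hS : S = {μ | μ ∈ Ico (0:ℝ) 1 ∧
      0 ≤ (1 - μ) * deriv (Rcurve F) t + (1 - F t) * μ})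
    (g : ℝ → ℝ)
    (hg : ∀ μ ∈ S, g μ ∈ Ioc (0:ℝ) 1 ∧
      ∃ p2R p2A : Measure ℝ, Continuation F μ (g μ) p2R p2A t ∧ SophFocused p2A t) :
    StrictMonoOn g S ∧ ∀ μ ∈ S, DifferentiableWithinAt ℝ g S μ := by
  have hSmem : ∀ μ ∈ S, μ ∈ Ico (0:ℝ) 1 := by
    intro μ hμ; rw [hS] at hμ; exact hμ.1
  have hdat : ∀ μ ∈ S, 0 < μ ∧ ∃ a b : ℝ, a ∈ Ioo 0 (g μ) ∧ b ∈ Ioo (g μ) t ∧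
      deriv (Rcurve F) a = 1 - (μ * F t + (1 - μ) * F (g μ)) ∧
      deriv (Rcurve F) b = 1 - F t ∧
      (μ * F t + (1 - μ) * F (g μ) - 1) * a + Rcurve F a
        = μ * ((F t - 1) * b + Rcurve F b) := by
    intro μ hμ
    obtain ⟨hgIoc, p2R, p2A, hc, hsf⟩ := hg μ hμ
    exact extraction hF hcon hRd ht (hSmem μ hμ).1 (hSmem μ hμ).2 hgIoc hc hsf
  have hFt1 : F t < 1 := hF.Flt1 ht.1.le ht.2
  -- the common fact : for μ ∈ S, F (g μ) < F t and D μ ∈ Ioo 0 1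
  have hgmaj : ∀ μ ∈ S, g μ < t := by
    intro μ hμ
    obtain ⟨_, a, b, _, hb, _, _, _⟩ := hdat μ hμ
    exact lt_trans hb.1 hb.2
  have hFgt : ∀ μ ∈ S, F (g μ) < F t := by
    intro μ hμ
    exact hF.mono ⟨(hg μ hμ).1.1.le, (hg μ hμ).1.2⟩ ⟨ht.1.le, ht.2.le⟩ (hgmaj μ hμ)
  have hDpos : ∀ μ ∈ S, 0 < μ * F t + (1 - μ) * F (g μ) := by
    intro μ hμ
    have h1 := (hdat μ hμ).1
    have h2 : 0 < F t := hF.Fpos ht.1 ht.2.le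
    have h3 : 0 < F (g μ) := hF.Fpos (hg μ hμ).1.1 (hg μ hμ).1.2
    nlinarith [(hSmem μ hμ).2]
  have hDltFt : ∀ μ ∈ S, μ * F t + (1 - μ) * F (g μ) < F t := by
    intro μ hμ
    have h1 := hFgt μ hμ
    have h2 := (hSmem μ hμ).2
    nlinarith
  have hDIoo : ∀ μ ∈ S, μ * F t + (1 - μ) * F (g μ) ∈ Ioo (0:ℝ) 1 :=
    fun μ hμ => ⟨hDpos μ hμ, lt_trans (hDltFt μ hμ) hFt1⟩
  -- Strict monotonicity
  have hSM : StrictMonoOn g S := by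
    intro μ1 hμ1S μ2 hμ2S h12
    obtain ⟨hμ1pos, a1, b1, ha1, hb1, hda1, hdb1, hv1⟩ := hdat μ1 hμ1S
    obtain ⟨hμ2pos, a2, b2, ha2, hb2, hda2, hdb2, hv2⟩ := hdat μ2 hμ2S
    have hp1 := (hg μ1 hμ1S).1
    have hp2 := (hg μ2 hμ2S).1
    have hb1Icc : b1 ∈ Icc (0:ℝ) 1 :=
      ⟨le_trans hp1.1.le hb1.1.le, (hb1.2.trans ht.2).le⟩
    have hb2Icc : b2 ∈ Icc (0:ℝ) 1 :=
      ⟨le_trans hp2.1.le hb2.1.le, (hb2.2.trans ht.2).le⟩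
    have hb12 : b1 = b2 := by
      apply (derivR_anti hcon hRd).injOn hb1Icc hb2Icc
      rw [hdb1, hdb2]
    by_contra hcn
    push_neg at hcn
    have hgle : g μ2 ≤ g μ1 := hcn
    have hq : F (g μ2) ≤ F (g μ1) :=
      hF.FmonoOn ⟨hp2.1.le, hp2.2⟩ ⟨hp1.1.le, hp1.2⟩ hgle
    set q1 := F (g μ1) with hq1d
    set q2 := F (g μ2) with hq2d
    set D1 := μ1 * F t + (1 - μ1) * q1 with hD1d
    set D2 := μ2 * F t + (1 - μ2) * q2 with hD2d
    set K := (F t - 1) * b1 + Rcurve F b1 with hKd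
    rw [← hb12] at hv2
    -- maximality facts
    have ha1Ioo : a1 ∈ Ioo (0:ℝ) 1 := ⟨ha1.1, lt_of_lt_of_le ha1.2 hp1.2⟩
    have ha2Ioo : a2 ∈ Ioo (0:ℝ) 1 := ⟨ha2.1, lt_of_lt_of_le ha2.2 hp2.2⟩
    have hb1Ioo : b1 ∈ Ioo (0:ℝ) 1 := ⟨lt_trans hp1.1 hb1.1, hb1.2.trans ht.2⟩
    have hA1max : IsMaxOn (obj F D1) (Icc 0 1) a1 := deriv_isMaxOn hcon hRd ha1Ioo hda1
    have hBmax : IsMaxOn (obj F (F t)) (Icc 0 1) b1 := deriv_isMaxOn hcon hRd hb1Ioo hdb1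
    have ha2Icc : a2 ∈ Icc (0:ℝ) 1 := ⟨ha2Ioo.1.le, ha2Ioo.2.le⟩
    -- the chain
    have e1 : (D1 - 1) * a1 + Rcurve F a1 = μ1 * K := hv1
    have e2 : (D2 - 1) * a2 + Rcurve F a2 = μ2 * K := hv2
    have step1 : (D1 - 1) * a2 + Rcurve F a2 ≤ μ1 * K := by
      have h := isMaxOn_iff.mp hA1max a2 ha2Icc
      simp only [obj] at h
      linarith [e1]
    have step2 : μ2 * K ≤ μ1 * K + (D2 - D1) * a2 := by nlinarith [step1, e2]
    have hDdiff : D2 - D1 ≤ (μ2 - μ1) * (F t - q1) := by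
      have h1 : (1 - μ2) * q2 ≤ (1 - μ2) * q1 :=
        mul_le_mul_of_nonneg_left hq (by linarith [(hSmem μ2 hμ2S).2])
      rw [hD1d, hD2d]
      nlinarith [h1]
    have step3 : K ≤ (F t - q1) * a2 := by
      have h1 : (D2 - D1) * a2 ≤ (μ2 - μ1) * (F t - q1) * a2 :=
        mul_le_mul_of_nonneg_right hDdiff ha2Ioo.1.le
      have h2 : (μ2 - μ1) * K ≤ (μ2 - μ1) * ((F t - q1) * a2) := by nlinarith [step2, h1]
      exact le_of_mul_le_mul_left (by nlinarith [h2]) (by linarith : (0:ℝ) < μ2 - μ1)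
    have step4 : K ≤ (F t - q2) * a2 := by nlinarith [step3, hq, ha2Ioo.1]
    -- strictness
    have hD2lt : D2 < F t := hDltFt μ2 hμ2S
    have ha2b : a2 ≠ b1 := by
      intro h
      rw [h, hdb1] at hda2
      linarith [hD2lt]
    have hstrict : (F t - 1) * a2 + Rcurve F a2 < K := by
      have hle := isMaxOn_iff.mp hBmax a2 ha2Icc
      simp only [obj] at hle
      rcases lt_or_eq_of_le hle with h | h
      · exact h
      · exfalso
        have hA2Bmax : IsMaxOn (obj F (F t)) (Icc 0 1) a2 := by
          intro y hy
          simp only [obj, mem_setOf_eq]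
          have := isMaxOn_iff.mp hBmax y hy
          simp only [obj] at this
          linarith [h]
        exact ha2b (maxpt_unique hcon ha2Icc hb1Icc hA2Bmax hBmax)
    -- final contradiction
    have hexp : (F t - 1) * a2 + Rcurve F a2
        = ((D2 - 1) * a2 + Rcurve F a2) + (F t - D2) * a2 := by ring
    have h5 : (F t - D2) * a2 = (1 - μ2) * ((F t - q2) * a2) := by
      rw [hD2d]; ring
    have h6 : (1 - μ2) * K ≤ (1 - μ2) * ((F t - q2) * a2) :=
      mul_le_mul_of_nonneg_left step4 (by linarith [(hSmem μ2 hμ2S).2])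
    nlinarith [hstrict, hexp, h5, h6, e2]
  refine ⟨hSM, ?_⟩
  -- Differentiability
  intro μ0 hμ0S
  obtain ⟨hμ0pos, a0, b0, ha0, hb0, hda0, hdb0, hv0⟩ := hdat μ0 hμ0S
  have hp0 := (hg μ0 hμ0S).1
  set p0 := g μ0 with hp0d
  set D0 := μ0 * F t + (1 - μ0) * F p0 with hD0d
  have hD0Ioo : D0 ∈ Ioo (0:ℝ) 1 := hDIoo μ0 hμ0S
  set K := (F t - 1) * b0 + Rcurve F b0 with hKd
  have hb0Ioo : b0 ∈ Ioo (0:ℝ) 1 := ⟨lt_trans hp0.1 hb0.1, hb0.2.trans ht.2⟩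
  have hb0Icc : b0 ∈ Icc (0:ℝ) 1 := ⟨hb0Ioo.1.le, hb0Ioo.2.le⟩
  have hKpos : 0 < K := by
    have hFb0 : F b0 < F t :=
      hF.mono hb0Icc ⟨ht.1.le, ht.2.le⟩ hb0.2
    have : K = b0 * (F t - F b0) := by rw [hKd, Rcurve]; ring
    rw [this]
    exact mul_pos hb0Ioo.1 (by linarith)
  -- the master equation Wf(D μ) = μ * K on S
  have hWall : ∀ μ ∈ S, Wf F (μ * F t + (1 - μ) * F (g μ)) = μ * K := by
    intro μ hμS
    obtain ⟨hμpos, a, b, hA, hB, hda, hdb, hv⟩ := hdat μ hμS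
    have hbIcc : b ∈ Icc (0:ℝ) 1 :=
      ⟨le_trans (hg μ hμS).1.1.le hB.1.le, (hB.2.trans ht.2).le⟩
    have hb_eq : b = b0 := by
      apply (derivR_anti hcon hRd).injOn hbIcc hb0Icc
      rw [hdb, hdb0]
    have haIoo : a ∈ Ioo (0:ℝ) 1 := ⟨hA.1, lt_of_lt_of_le hA.2 (hg μ hμS).1.2⟩
    have haIcc : a ∈ Icc (0:ℝ) 1 := ⟨haIoo.1.le, haIoo.2.le⟩
    have hAmax : IsMaxOn (obj F (μ * F t + (1 - μ) * F (g μ))) (Icc 0 1) a :=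
      deriv_isMaxOn hcon hRd haIoo hda
    have hsel : rsel F (μ * F t + (1 - μ) * F (g μ)) = a :=
      maxpt_unique hcon (rsel_mem hF _) haIcc (rsel_isMaxOn hF _) hAmax
    rw [Wf, hsel]
    simp only [obj]
    rw [hb_eq] at hv
    rw [← hKd] at hv
    linarith [hv]
  have hWD0 : Wf F D0 = μ0 * K := hWall μ0 hμ0S
  -- set up the inverse of Wf around D0
  set r0 := rsel F D0 with hr0d
  have hr0Ioo : r0 ∈ Ioo (0:ℝ) 1 := rsel_interior hF hcon hRd hD0Ioo
  set η : ℝ := min D0 (1 - D0) / 2 with hηd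
  have hηpos : 0 < η := by
    rw [hηd]
    have h1 := hD0Ioo.1
    have h2 := hD0Ioo.2
    have h3 : 0 < min D0 (1 - D0) := lt_min h1 (by linarith)
    linarith
  have hseg : Icc (D0 - η) (D0 + η) ⊆ Ioo (0:ℝ) 1 := by
    intro x hx
    have h1 : η ≤ D0 / 2 := by
      rw [hηd]
      have : min D0 (1 - D0) ≤ D0 := min_le_left _ _
      linarith
    have h2 : η ≤ (1 - D0) / 2 := by
      rw [hηd]
      have : min D0 (1 - D0) ≤ 1 - D0 := min_le_right _ _
      linarith
    constructor
    · have := hx.1; have := hD0Ioo.1; linarith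
    · have := hx.2; have := hD0Ioo.2; linarith
  have hce : D0 - η ≤ D0 + η := by linarith
  have hWsm : StrictMonoOn (Wf F) (Icc (D0 - η) (D0 + η)) := by
    intro x hx y hy hxy
    exact Wf_strictMonoOn hF hcon hRd (hseg hx) hxy
  set Φ := clampf (Wf F) (D0 - η) (D0 + η) with hΦd
  have hΦsm : StrictMono Φ := clampf_strictMono hce hWsm
  have hΦsurj : Function.Surjective Φ := clampf_surjective hce (Wf_cont hF)
  set eW := StrictMono.orderIsoOfSurjective Φ hΦsm hΦsurj with heWd
  set ψ : ℝ → ℝ := fun y => eW.symm y with hψd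
  have hψcont : Continuous ψ := eW.symm.continuous
  have hinv : ∀ y, Φ (ψ y) = y := fun y =>
    StrictMono.orderIsoOfSurjective_self_symm_apply Φ hΦsm hΦsurj y
  have hinv2 : ∀ x, ψ (Φ x) = x := fun x =>
    StrictMono.orderIsoOfSurjective_symm_apply_self Φ hΦsm hΦsurj x
  have hD0seg : D0 ∈ Icc (D0 - η) (D0 + η) := ⟨by linarith, by linarith⟩
  have hΦD0 : Φ D0 = μ0 * K := by
    rw [hΦd, clampf_eqOn hD0seg, hWD0]
  have hψD0 : ψ (μ0 * K) = D0 := by rw [← hΦD0, hinv2]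
  have hΦder : HasDerivAt Φ r0 D0 := by
    have hev : Φ =ᶠ[nhds D0] Wf F := by
      filter_upwards [Icc_mem_nhds (by linarith : D0 - η < D0) (by linarith : D0 < D0 + η)]
        with x hx
      exact clampf_eqOn hx
    exact hev.hasDerivAt_iff.mpr (Wf_hasDerivAt hF hcon hRd hD0Ioo)
  have hψder : HasDerivAt ψ r0⁻¹ (μ0 * K) := by
    apply HasDerivAt.of_local_left_inverse hψcont.continuousAt
      (by rw [hψD0]; exact hΦder) (ne_of_gt hr0Ioo.1)
    filter_upwards with y
    exact hinv y
  -- set up the inverse of F on [0,1]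
  set Φf := clampf F 0 1 with hΦfd
  have hFsm01 : StrictMonoOn F (Icc (0:ℝ) 1) := hF.mono
  have hΦfsm : StrictMono Φf := clampf_strictMono zero_le_one hFsm01
  have hΦfsurj : Function.Surjective Φf := clampf_surjective zero_le_one hF.cont
  set eF := StrictMono.orderIsoOfSurjective Φf hΦfsm hΦfsurj with heFd
  set Ψ : ℝ → ℝ := fun y => eF.symm y with hΨd
  have hΨcont : Continuous Ψ := eF.symm.continuous
  have hfinv : ∀ y, Φf (Ψ y) = y := fun y =>
    StrictMono.orderIsoOfSurjective_self_symm_apply Φf hΦfsm hΦfsurj y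
  have hfinv2 : ∀ x, Ψ (Φf x) = x := fun x =>
    StrictMono.orderIsoOfSurjective_symm_apply_self Φf hΦfsm hΦfsurj x
  have hp0Ioo : p0 ∈ Ioo (0:ℝ) 1 := ⟨hp0.1, (hgmaj μ0 hμ0S).trans ht.2⟩
  have hΦfp0 : Φf p0 = F p0 := clampf_eqOn ⟨hp0Ioo.1.le, hp0Ioo.2.le⟩
  have hΨF : Ψ (F p0) = p0 := by rw [← hΦfp0, hfinv2]
  have hdFpos : 0 < deriv F p0 := derivF_pos hF hcon hRd hp0Ioo
  have hΦfder : HasDerivAt Φf (deriv F p0) p0 := by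
    have hev : Φf =ᶠ[nhds p0] F := by
      filter_upwards [Icc_mem_nhds hp0Ioo.1 hp0Ioo.2] with x hx
      exact clampf_eqOn hx
    exact hev.hasDerivAt_iff.mpr (F_diffAt hRd hp0Ioo).hasDerivAt
  have hΨder : HasDerivAt Ψ (deriv F p0)⁻¹ (F p0) := by
    apply HasDerivAt.of_local_left_inverse hΨcont.continuousAt
      (by rw [hΨF]; exact hΦfder) (ne_of_gt hdFpos)
    filter_upwards with y
    exact hfinv y
  -- the candidate differentiable extension
  set G : ℝ → ℝ := fun μ => Ψ ((ψ (μ * K) - μ * F t) / (1 - μ)) with hGd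
  have hμ0lt1 : μ0 < 1 := (hSmem μ0 hμ0S).2
  have hinner_val : (ψ (μ0 * K) - μ0 * F t) / (1 - μ0) = F p0 := by
    have hne : (1:ℝ) - μ0 ≠ 0 := by intro h; rw [sub_eq_zero] at h; exact absurd h.symm (ne_of_lt hμ0lt1)
    rw [hψD0, hD0d]
    field_simp
    ring
  have hinner_diff : DifferentiableAt ℝ (fun μ : ℝ => (ψ (μ * K) - μ * F t) / (1 - μ)) μ0 := by
    apply DifferentiableAt.div
    · apply DifferentiableAt.sub
      · exact hψder.differentiableAt.comp μ0 (differentiableAt_id.mul_const K)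
      · exact differentiableAt_id.mul_const (F t)
    · exact (differentiableAt_const 1).sub differentiableAt_id
    · intro h; rw [sub_eq_zero] at h; exact absurd h.symm (ne_of_lt hμ0lt1)
  have hGdiff : DifferentiableAt ℝ G μ0 := by
    rw [hGd]
    have := hΨder.differentiableAt
    rw [← hinner_val] at this
    exact this.comp μ0 hinner_diff
  -- G agrees with g on S near μ0
  have hmul_cont : ContinuousAt (fun μ : ℝ => μ * K) μ0 :=
    (continuous_id.mul continuous_const).continuousAt
  have hWlo : Wf F (D0 - η) < μ0 * K := by
    rw [← hWD0]
    exact Wf_strictMonoOn hF hcon hRd (hseg ⟨le_refl _, by linarith⟩) (by linarith)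
  have hWhi : μ0 * K < Wf F (D0 + η) := by
    rw [← hWD0]
    exact Wf_strictMonoOn hF hcon hRd hD0Ioo (by linarith)
  have hev : ∀ᶠ μ in nhds μ0, μ * K ∈ Ioo (Wf F (D0 - η)) (Wf F (D0 + η)) :=
    hmul_cont.eventually_mem (Ioo_mem_nhds hWlo hWhi)
  have hcomp : ∀ μ ∈ S, μ * K ∈ Ioo (Wf F (D0 - η)) (Wf F (D0 + η)) → g μ = G μ := by
    intro μ hμS hμmem
    have hW := hWall μ hμS
    have hDμIoo := hDIoo μ hμS
    have hμlt1 : μ < 1 := (hSmem μ hμS).2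
    set Dμ := μ * F t + (1 - μ) * F (g μ) with hDμd
    have hDin : Dμ ∈ Icc (D0 - η) (D0 + η) := by
      constructor
      · by_contra hcn
        push_neg at hcn
        have h1 : Wf F Dμ ≤ Wf F (D0 - η) := Wf_mono hF hcn.le
        rw [hW] at h1
        exact absurd h1 (not_le.mpr hμmem.1)
      · by_contra hcn
        push_neg at hcn
        have h1 : Wf F (D0 + η) ≤ Wf F Dμ := Wf_mono hF hcn.le
        rw [hW] at h1
        exact absurd h1 (not_le.mpr hμmem.2)
    have hψval : ψ (μ * K) = Dμ := by
      have h1 : Φ Dμ = μ * K := by rw [hΦd, clampf_eqOn hDin, hW]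
      rw [← h1, hinv2]
    have hFg : (ψ (μ * K) - μ * F t) / (1 - μ) = F (g μ) := by
      have hne : (1:ℝ) - μ ≠ 0 := by intro h; rw [sub_eq_zero] at h; exact absurd h.symm (ne_of_lt hμlt1)
      rw [hψval, hDμd]
      field_simp
      ring
    have hgIcc : g μ ∈ Icc (0:ℝ) 1 := ⟨(hg μ hμS).1.1.le, (hg μ hμS).1.2⟩
    rw [hGd]
    simp only
    rw [hFg, ← clampf_eqOn (f := F) hgIcc, hfinv2]
  have heq_event : g =ᶠ[nhdsWithin μ0 S] G := by
    have h1 : ∀ᶠ μ in nhdsWithin μ0 S, μ * K ∈ Ioo (Wf F (D0 - η)) (Wf F (D0 + η)) :=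
      hev.filter_mono nhdsWithin_le_nhds
    filter_upwards [h1, self_mem_nhdsWithin] with μ hμ1 hμ2
    exact hcomp μ hμ2 hμ1
  have heq_at : g μ0 = G μ0 := by
    apply hcomp μ0 hμ0S
    exact ⟨hWlo, hWhi⟩
  exact (hGdiff.differentiableWithinAt).congr_of_eventuallyEq heq_event heq_at


end AnalysisAux

end RepeatedSales
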